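/- If f : ℝ₊^K → ℝ₊₊ is a standard interference function and T : ℝ₊^K → ℝ₊₊^K is a standard interference mapping (each coordinate is a standard interference function), then the composition p ↦ f(T(p)) is a standard interference function. -/
import Mathlib

/-- `f` is a standard interference function on `ℝ₊^K`: strictly positive on the
nonnegative orthant, monotone w.r.t. the coordinatewise order, and scalable. -/
def IsStdIF {K : ℕ} (f : (Fin K → ℝ) → ℝ) : Prop :=
  (∀ p : Fin K → ℝ, (∀ i, 0 ≤ p i) → 0 < f p) ∧
  (∀ p q : Fin K → ℝ, (∀ i, 0 ≤ q i) → (∀ i, q i ≤ p i) → f q ≤ f p) ∧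
  (∀ p : Fin K → ℝ, (∀ i, 0 ≤ p i) → ∀ α : ℝ, 1 < α → f (α • p) < α * f p)

theorem stmt2 {K : ℕ} (f : (Fin K → ℝ) → ℝ) (T : (Fin K → ℝ) → (Fin K → ℝ))
    (hf : IsStdIF f) (hT : ∀ k : Fin K, IsStdIF (fun p => T p k)) :
    IsStdIF (fun p => f (T p)) := by
  obtain ⟨hfpos, hfmono, hfscale⟩ := hf
  refine ⟨?_, ?_, ?_⟩
  · intro p hp
    exact hfpos (T p) (fun i => ((hT i).1 p hp).le)
  · intro p q hq hqp
    have hp : ∀ i, 0 ≤ p i := fun i => (hq i).trans (hqp i)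
    exact hfmono (T p) (T q) (fun i => ((hT i).1 q hq).le)
      (fun i => (hT i).2.1 p q hq hqp)
  · intro p hp α hα
    have hαp : ∀ i, 0 ≤ (α • p) i := fun i =>
      mul_nonneg (by linarith) (hp i)
    have h1 : f (T (α • p)) ≤ f (α • T p) := by
      refine hfmono (α • T p) (T (α • p)) (fun i => ((hT i).1 _ hαp).le) (fun i => ?_)
      exact ((hT i).2.2 p hp α hα).le
    calc f (T (α • p)) ≤ f (α • T p) := h1
      _ < α * f (T p) := hfscale (T p) (fun i => ((hT i).1 p hp).le) α hα
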